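/- Let B be a bounded continuous normalized potential (L_B(1) = 1) and μ a σ-invariant Borel probability measure on ℝ^ℕ with L_B^* μ = μ. Then for every strictly positive bounded continuous function u, ∫ log(L_0(u)/u) dμ ≥ −∫ B dμ, with equality for u = e^B. Consequently h(μ) := inf over such u of ∫ log(L_0(u)/u) dμ equals −∫ B dμ. -/

import Mathlib

open Real MeasureTheory

def consR (a : ℝ) (x : ℕ → ℝ) : ℕ → ℝ := fun n =>
  match n with
  | 0 => a
  | k + 1 => x k

def shiftR (x : ℕ → ℝ) : ℕ → ℝ := fun n => x (n + 1)

/-- The Ruelle operator with zero potential: `L_0(u)(x) = ∫ u(ax) f(a) da`. -/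
noncomputable def Lzero (f : ℝ → ℝ) (u : (ℕ → ℝ) → ℝ) (x : ℕ → ℝ) : ℝ :=
  ∫ a : ℝ, u (consR a x) * f a

/-- The entropy
`h(μ) = inf { ∫ log(L_0(u)/u) dμ : u strictly positive bounded continuous }`. -/
noncomputable def entropyXY (f : ℝ → ℝ) (μ : MeasureTheory.Measure (ℕ → ℝ)) : ℝ :=
  sInf {r : ℝ | ∃ u : (ℕ → ℝ) → ℝ, Continuous u ∧ (∀ x, 0 < u x) ∧
    (∃ M, ∀ x, u x ≤ M) ∧ r = ∫ x, Real.log (Lzero f u x / u x) ∂μ}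

lemma continuous_consR : Continuous fun p : ℝ × (ℕ → ℝ) => consR p.1 p.2 := by
  apply continuous_pi
  intro n
  cases n with
  | zero => exact continuous_fst
  | succ k => exact (continuous_apply k).comp continuous_snd

lemma integrable_of_bdd {α : Type*} [MeasurableSpace α] {μ : Measure α} [IsFiniteMeasure μ]
    {g : α → ℝ} (hm : AEStronglyMeasurable g μ) {C : ℝ} (h : ∀ x, |g x| ≤ C) :
    Integrable g μ :=
  ⟨hm, HasFiniteIntegral.of_bounded (Filter.Eventually.of_forall (fun x => by
    rw [Real.norm_eq_abs]; exact h x))⟩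

-- measurability of x ↦ ∫ a, G (consR a x) * f a for continuous G, f
lemma meas_int (f : ℝ → ℝ) (hfc : Continuous f) (G : (ℕ → ℝ) → ℝ) (hG : Continuous G) :
    StronglyMeasurable (fun x : ℕ → ℝ => ∫ a : ℝ, G (consR a x) * f a) := by
  have hc : Continuous fun p : (ℕ → ℝ) × ℝ => G (consR p.2 p.1) * f p.2 :=
    (hG.comp (continuous_consR.comp (continuous_snd.prodMk continuous_fst))).mul
      (hfc.comp continuous_snd)
  exact hc.stronglyMeasurable.integral_prod_right'

-- Jensen via tangent line
lemma jensen_exp (w φ : ℝ → ℝ) (hw0 : ∀ a, 0 ≤ w a) (hw1 : ∫ a, w a = 1)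
    (hwi : Integrable w) (hwφ : Integrable (fun a => w a * φ a))
    (hweφ : Integrable (fun a => w a * Real.exp (φ a))) :
    ∫ a, w a * φ a ≤ Real.log (∫ a, w a * Real.exp (φ a)) := by
  set c := ∫ a, w a * φ a with hc
  have key : Real.exp c ≤ ∫ a, w a * Real.exp (φ a) := by
    have pt : ∀ a, w a * Real.exp c * (1 + (φ a - c)) ≤ w a * Real.exp (φ a) := by
      intro a
      have h1 : Real.exp c * (1 + (φ a - c)) ≤ Real.exp (φ a) := by
        have := Real.add_one_le_exp (φ a - c)
        calc Real.exp c * (1 + (φ a - c)) ≤ Real.exp c * Real.exp (φ a - c) := by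
              apply mul_le_mul_of_nonneg_left (by linarith) (Real.exp_pos c).le
          _ = Real.exp (φ a) := by rw [← Real.exp_add]; ring_nf
      calc w a * Real.exp c * (1 + (φ a - c)) = w a * (Real.exp c * (1 + (φ a - c))) := by ring
        _ ≤ w a * Real.exp (φ a) := mul_le_mul_of_nonneg_left h1 (hw0 a)
    have hInt : Integrable (fun a => w a * Real.exp c * (1 + (φ a - c))) := by
      have : (fun a => w a * Real.exp c * (1 + (φ a - c)))
          = fun a => Real.exp c * ((1 - c) * w a + w a * φ a) := by
        funext a; ring
      rw [this]
      exact ((hwi.const_mul _).add hwφ).const_mul _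
    have heq : ∫ a, w a * Real.exp c * (1 + (φ a - c)) = Real.exp c := by
      have : (fun a => w a * Real.exp c * (1 + (φ a - c)))
          = fun a => Real.exp c * ((1 - c) * w a + w a * φ a) := by
        funext a; ring
      rw [this, integral_const_mul, integral_add ((hwi.const_mul _)) hwφ,
        integral_const_mul, hw1, ← hc]
      ring
    calc Real.exp c = ∫ a, w a * Real.exp c * (1 + (φ a - c)) := heq.symm
      _ ≤ ∫ a, w a * Real.exp (φ a) := integral_mono hInt hweφ pt
  calc c = Real.log (Real.exp c) := (Real.log_exp c).symm
    _ ≤ Real.log (∫ a, w a * Real.exp (φ a)) := Real.log_le_log (Real.exp_pos c) key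

lemma abs_log_ratio {a b ε : ℝ} (ha : 0 < a) (hb : 0 < b) (hε : 0 < ε) :
    |Real.log (a + ε) - Real.log (b + ε)| ≤ |Real.log a - Real.log b| := by
  have key : ∀ p q : ℝ, 0 < p → 0 < q → p ≤ q →
      Real.log (q + ε) - Real.log (p + ε) ≤ Real.log q - Real.log p := by
    intro p q hp hq hpq
    have h1 : Real.log ((q + ε) * p) ≤ Real.log (q * (p + ε)) := by
      apply Real.log_le_log (by positivity)
      nlinarith
    rw [Real.log_mul (by positivity) (by positivity),
      Real.log_mul (by positivity) (by positivity)] at h1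
    linarith
  rcases le_total a b with h | h
  · have h1 : Real.log (a + ε) ≤ Real.log (b + ε) :=
      Real.log_le_log (by positivity) (by linarith)
    have h2 : Real.log a ≤ Real.log b := Real.log_le_log ha h
    rw [abs_sub_comm, abs_of_nonneg (by linarith), abs_sub_comm, abs_of_nonneg (by linarith)]
    exact key a b ha hb h
  · have h1 : Real.log (b + ε) ≤ Real.log (a + ε) :=
      Real.log_le_log (by positivity) (by linarith)
    have h2 : Real.log b ≤ Real.log a := Real.log_le_log hb h
    rw [abs_of_nonneg (by linarith), abs_of_nonneg (by linarith)]
    exact key b a hb ha h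

lemma exp_sub_one_le_mul (t : ℝ) : Real.exp t - 1 ≤ Real.exp t * t := by
  have h := Real.add_one_le_exp (-t)
  have he := Real.exp_pos t
  have hmul : Real.exp (-t) * Real.exp t = 1 := by rw [← Real.exp_add]; simp
  nlinarith

lemma key_eps (f : ℝ → ℝ) (hfc : Continuous f) (hfpos : ∀ a, 0 < f a)
    (hf1 : ∫ a : ℝ, f a = 1)
    (B : (ℕ → ℝ) → ℝ) (hBc : Continuous B) (CB : ℝ) (hB : ∀ x, |B x| ≤ CB)
    (hnorm : ∀ x, ∫ a : ℝ, Real.exp (B (consR a x)) * f a = 1)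
    (μ : Measure (ℕ → ℝ)) [IsProbabilityMeasure μ]
    (hfix : ∀ φ : (ℕ → ℝ) → ℝ, Continuous φ → (∃ C, ∀ x, |φ x| ≤ C) →
      ∫ x, (∫ a : ℝ, Real.exp (B (consR a x)) * φ (consR a x) * f a) ∂μ = ∫ x, φ x ∂μ)
    (u : (ℕ → ℝ) → ℝ) (huc : Continuous u) (hupos : ∀ x, 0 < u x)
    (M : ℝ) (huM : ∀ x, u x ≤ M) (ε : ℝ) (hε : 0 < ε) :
    -∫ x, B x ∂μ ≤ ∫ x, (Real.log (Lzero f u x + ε) - Real.log (u x + ε)) ∂μ := by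
  have hfint : Integrable f := by
    by_contra h
    rw [integral_undef h] at hf1
    norm_num at hf1
  have hM0 : 0 < M := lt_of_lt_of_le (hupos fun _ => 0) (huM _)
  -- the test function φ
  set φ : (ℕ → ℝ) → ℝ := fun x => Real.log (u x + ε) - B x with hφdef
  have hφc : Continuous φ := by
    exact ((huc.add continuous_const).log (fun x => ne_of_gt (by have := hupos x; show (0:ℝ) < u x + ε; linarith))).sub hBc
  have hCB0 : 0 ≤ CB := le_trans (abs_nonneg _) (hB (fun _ => 0))
  set K1 : ℝ := |Real.log ε| + |Real.log (M + ε)| with hK1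
  have hK10 : 0 ≤ K1 := by positivity
  have hlogb : ∀ x, |Real.log (u x + ε)| ≤ K1 := by
    intro x
    have h1 : Real.log ε ≤ Real.log (u x + ε) :=
      Real.log_le_log hε (by have := hupos x; linarith)
    have h2 : Real.log (u x + ε) ≤ Real.log (M + ε) :=
      Real.log_le_log (by have := hupos x; linarith) (by have := huM x; linarith)
    rw [abs_le]
    constructor
    · have := neg_abs_le (Real.log ε)
      have := abs_nonneg (Real.log (M + ε))
      simp only [hK1]; linarith
    · have := le_abs_self (Real.log (M + ε))
      have := abs_nonneg (Real.log ε)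
      simp only [hK1]; linarith
  set Kφ : ℝ := K1 + CB with hKφ
  have hφb : ∀ x, |φ x| ≤ Kφ := by
    intro x
    calc |φ x| ≤ |Real.log (u x + ε)| + |B x| := abs_sub _ _
      _ ≤ K1 + CB := add_le_add (hlogb x) (hB x)
  -- pointwise Jensen
  have hpoint : ∀ x, (∫ a : ℝ, Real.exp (B (consR a x)) * φ (consR a x) * f a)
      ≤ Real.log (Lzero f u x + ε) := by
    intro x
    have hwm : Continuous fun a : ℝ => Real.exp (B (consR a x)) * f a :=
      ((Real.continuous_exp.comp (hBc.comp
        (continuous_consR.comp (continuous_id.prodMk continuous_const)))).mul hfc)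
    have hwi : Integrable (fun a : ℝ => Real.exp (B (consR a x)) * f a) := by
      apply (hfint.const_mul (Real.exp CB)).mono hwm.aestronglyMeasurable
      apply Filter.Eventually.of_forall
      intro a
      have h1 : Real.exp (B (consR a x)) ≤ Real.exp CB :=
        Real.exp_le_exp.mpr (le_trans (le_abs_self _) (hB _))
      have := (hfpos a).le
      rw [Real.norm_eq_abs, Real.norm_eq_abs, abs_of_nonneg (by positivity),
        abs_of_nonneg (by positivity)]
      exact mul_le_mul_of_nonneg_right h1 this
    have hwφi : Integrable (fun a : ℝ => (Real.exp (B (consR a x)) * f a) * φ (consR a x)) := by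
      apply (hfint.const_mul (Real.exp CB * Kφ)).mono
      · exact (hwm.mul (hφc.comp (continuous_consR.comp
          (continuous_id.prodMk continuous_const)))).aestronglyMeasurable
      · apply Filter.Eventually.of_forall
        intro a
        have h1 : Real.exp (B (consR a x)) ≤ Real.exp CB :=
          Real.exp_le_exp.mpr (le_trans (le_abs_self _) (hB _))
        have h2 := hφb (consR a x)
        have hf0 := (hfpos a).le
        rw [Real.norm_eq_abs, Real.norm_eq_abs, abs_mul, abs_mul,
          abs_of_nonneg (Real.exp_pos _).le, abs_of_nonneg hf0,
          abs_of_nonneg (by positivity : (0:ℝ) ≤ Real.exp CB * Kφ * f a)]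
        calc Real.exp (B (consR a x)) * f a * |φ (consR a x)|
            ≤ Real.exp CB * f a * Kφ := by
              apply mul_le_mul (mul_le_mul_of_nonneg_right h1 hf0) h2 (abs_nonneg _)
              positivity
          _ = Real.exp CB * Kφ * f a := by ring
    have hexpeq : (fun a : ℝ => (Real.exp (B (consR a x)) * f a) * Real.exp (φ (consR a x)))
        = fun a : ℝ => (u (consR a x) + ε) * f a := by
      funext a
      have hpos : 0 < u (consR a x) + ε := by have := hupos (consR a x); linarith
      simp only [hφdef]
      rw [Real.exp_sub, Real.exp_log hpos]
      field_simp
    have huint : Integrable (fun a : ℝ => u (consR a x) * f a) := by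
      apply (hfint.const_mul M).mono
      · exact ((huc.comp (continuous_consR.comp
          (continuous_id.prodMk continuous_const))).mul hfc).aestronglyMeasurable
      · apply Filter.Eventually.of_forall
        intro a
        have h1 := hupos (consR a x); have h2 := huM (consR a x); have h3 := (hfpos a).le
        rw [Real.norm_eq_abs, Real.norm_eq_abs, abs_of_nonneg (by positivity),
          abs_of_nonneg (by positivity)]
        exact mul_le_mul_of_nonneg_right h2 h3
    have hueint : Integrable (fun a : ℝ => (u (consR a x) + ε) * f a) := by
      have : (fun a : ℝ => (u (consR a x) + ε) * f a)
          = fun a => u (consR a x) * f a + ε * f a := by funext a; ring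
      rw [this]
      exact huint.add (hfint.const_mul ε)
    have hueval : ∫ a : ℝ, (u (consR a x) + ε) * f a = Lzero f u x + ε := by
      have : (fun a : ℝ => (u (consR a x) + ε) * f a)
          = fun a => u (consR a x) * f a + ε * f a := by funext a; ring
      rw [this, integral_add huint (hfint.const_mul ε), integral_const_mul, hf1]
      simp [Lzero]
    have hjen := jensen_exp (fun a => Real.exp (B (consR a x)) * f a)
      (fun a => φ (consR a x)) (fun a => by have := (hfpos a).le; positivity) (hnorm x) hwi hwφi
      (by rw [hexpeq] at *; exact hueint)
    rw [hexpeq, hueval] at hjen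
    calc (∫ a : ℝ, Real.exp (B (consR a x)) * φ (consR a x) * f a)
        = ∫ a : ℝ, (Real.exp (B (consR a x)) * f a) * φ (consR a x) := by
          congr 1; funext a; ring
      _ ≤ Real.log (Lzero f u x + ε) := hjen
  -- top-level integrabilities
  have huint : ∀ x, Integrable (fun a : ℝ => u (consR a x) * f a) := by
    intro x
    apply (hfint.const_mul M).mono
    · exact ((huc.comp (continuous_consR.comp
        (continuous_id.prodMk continuous_const))).mul hfc).aestronglyMeasurable
    · apply Filter.Eventually.of_forall
      intro a
      have h1 := hupos (consR a x); have h2 := huM (consR a x); have h3 := (hfpos a).le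
      rw [Real.norm_eq_abs, Real.norm_eq_abs, abs_of_nonneg (by positivity),
        abs_of_nonneg (by positivity)]
      exact mul_le_mul_of_nonneg_right h2 h3
  have hgint : ∀ x, Integrable (fun a : ℝ => Real.exp (B (consR a x)) * φ (consR a x) * f a) := by
    intro x
    apply (hfint.const_mul (Real.exp CB * Kφ)).mono
    · exact (((Real.continuous_exp.comp (hBc.comp (continuous_consR.comp
        (continuous_id.prodMk continuous_const)))).mul (hφc.comp (continuous_consR.comp
        (continuous_id.prodMk continuous_const)))).mul hfc).aestronglyMeasurable
    · apply Filter.Eventually.of_forall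
      intro a
      have h1 : Real.exp (B (consR a x)) ≤ Real.exp CB :=
        Real.exp_le_exp.mpr (le_trans (le_abs_self _) (hB _))
      have h2 := hφb (consR a x)
      have hf0 := (hfpos a).le
      rw [Real.norm_eq_abs, Real.norm_eq_abs, abs_mul, abs_mul,
        abs_of_nonneg (Real.exp_pos _).le, abs_of_nonneg hf0,
        abs_of_nonneg (by positivity : (0:ℝ) ≤ Real.exp CB * Kφ * f a)]
      calc Real.exp (B (consR a x)) * |φ (consR a x)| * f a
          ≤ Real.exp CB * Kφ * f a := by
            apply mul_le_mul_of_nonneg_right _ hf0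
            exact mul_le_mul h1 h2 (abs_nonneg _) (Real.exp_pos _).le
        _ = Real.exp CB * Kφ * f a := by ring
  have hLm : StronglyMeasurable (Lzero f u) := meas_int f hfc u huc
  have hL0 : ∀ x, 0 ≤ Lzero f u x := fun x => integral_nonneg
    (fun a => by have := (hupos (consR a x)).le; have := (hfpos a).le; positivity)
  have hLM : ∀ x, Lzero f u x ≤ M := by
    intro x
    have : Lzero f u x ≤ ∫ a : ℝ, M * f a := by
      apply integral_mono (huint x) (hfint.const_mul M)
      intro a
      exact mul_le_mul_of_nonneg_right (huM _) (hfpos a).le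
    rwa [integral_const_mul, hf1, mul_one] at this
  -- integrability over μ
  have hgi : Integrable
      (fun x => ∫ a : ℝ, Real.exp (B (consR a x)) * φ (consR a x) * f a) μ := by
    apply integrable_of_bdd (C := Real.exp CB * Kφ)
    · exact (meas_int f hfc (fun z => Real.exp (B z) * φ z)
        ((Real.continuous_exp.comp hBc).mul hφc)).aestronglyMeasurable
    · intro x
      have h1 : |∫ a : ℝ, Real.exp (B (consR a x)) * φ (consR a x) * f a|
          ≤ ∫ a : ℝ, |Real.exp (B (consR a x)) * φ (consR a x) * f a| :=
        by
          rw [← Real.norm_eq_abs]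
          exact (norm_integral_le_integral_norm _).trans
            (le_of_eq (by simp only [Real.norm_eq_abs]))
      have h2 : ∫ a : ℝ, |Real.exp (B (consR a x)) * φ (consR a x) * f a|
          ≤ ∫ a : ℝ, (Real.exp CB * Kφ) * f a := by
        apply integral_mono (hgint x).abs (hfint.const_mul _)
        intro a
        show |Real.exp (B (consR a x)) * φ (consR a x) * f a| ≤ Real.exp CB * Kφ * f a
        have h1 : Real.exp (B (consR a x)) ≤ Real.exp CB :=
          Real.exp_le_exp.mpr (le_trans (le_abs_self _) (hB _))
        have h2 := hφb (consR a x)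
        have hf0 := (hfpos a).le
        rw [abs_mul, abs_mul, abs_of_nonneg (Real.exp_pos _).le, abs_of_nonneg hf0]
        calc Real.exp (B (consR a x)) * |φ (consR a x)| * f a
            ≤ Real.exp CB * Kφ * f a := by
              apply mul_le_mul_of_nonneg_right _ hf0
              exact mul_le_mul h1 h2 (abs_nonneg _) (Real.exp_pos _).le
          _ = Real.exp CB * Kφ * f a := by ring
      rw [integral_const_mul, hf1, mul_one] at h2
      linarith
  have hhi : Integrable (fun x => Real.log (Lzero f u x + ε)) μ := by
    apply integrable_of_bdd (C := K1)
    · exact (Real.measurable_log.comp ((hLm.measurable).add_const ε)).aestronglyMeasurable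
    · intro x
      have h1 : Real.log ε ≤ Real.log (Lzero f u x + ε) :=
        Real.log_le_log hε (by have := hL0 x; linarith)
      have h2 : Real.log (Lzero f u x + ε) ≤ Real.log (M + ε) :=
        Real.log_le_log (by have := hL0 x; linarith) (by have := hLM x; linarith)
      rw [abs_le]
      constructor
      · have := neg_abs_le (Real.log ε)
        have := abs_nonneg (Real.log (M + ε))
        simp only [hK1]; linarith
      · have := le_abs_self (Real.log (M + ε))
        have := abs_nonneg (Real.log ε)
        simp only [hK1]; linarith
  have hlui : Integrable (fun x => Real.log (u x + ε)) μ := by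
    apply integrable_of_bdd (C := K1)
    · exact ((huc.add continuous_const).log
        (fun x => ne_of_gt (by have := hupos x; show (0:ℝ) < u x + ε; linarith))).aestronglyMeasurable
    · exact hlogb
  have hbint : Integrable B μ := integrable_of_bdd hBc.aestronglyMeasurable hB
  have hmono := integral_mono hgi hhi hpoint
  have hfixφ := hfix φ hφc ⟨Kφ, hφb⟩
  have hφsplit : ∫ x, φ x ∂μ = (∫ x, Real.log (u x + ε) ∂μ) - ∫ x, B x ∂μ := by
    simp only [hφdef]
    exact integral_sub hlui hbint
  rw [integral_sub hhi hlui]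
  linarith [hmono, hfixφ.trans hφsplit]

/-- For a bounded continuous normalized potential `B` (`L_B(1) = 1`) and a
`σ`-invariant probability measure `μ` with `L_B^* μ = μ`: for every strictly
positive bounded continuous `u`, `∫ log(L_0(u)/u) dμ ≥ −∫ B dμ`, with equality
for `u = e^B`; consequently `h(μ) = −∫ B dμ`. -/
theorem entropy_of_gibbs_state (f : ℝ → ℝ) (hfc : Continuous f) (hfpos : ∀ a, 0 < f a)
    (hf1 : ∫ a : ℝ, f a = 1)
    (B : (ℕ → ℝ) → ℝ) (hBc : Continuous B) (CB : ℝ) (hB : ∀ x, |B x| ≤ CB)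
    (hnorm : ∀ x, ∫ a : ℝ, Real.exp (B (consR a x)) * f a = 1)
    (μ : Measure (ℕ → ℝ)) [IsProbabilityMeasure μ]
    (hinv : MeasurePreserving shiftR μ μ)
    (hfix : ∀ φ : (ℕ → ℝ) → ℝ, Continuous φ → (∃ C, ∀ x, |φ x| ≤ C) →
      ∫ x, (∫ a : ℝ, Real.exp (B (consR a x)) * φ (consR a x) * f a) ∂μ = ∫ x, φ x ∂μ) :
    (∀ u : (ℕ → ℝ) → ℝ, Continuous u → (∀ x, 0 < u x) → (∃ M, ∀ x, u x ≤ M) →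
      -∫ x, B x ∂μ ≤ ∫ x, Real.log (Lzero f u x / u x) ∂μ) ∧
    (∫ x, Real.log (Lzero f (fun z => Real.exp (B z)) x / Real.exp (B x)) ∂μ
        = -∫ x, B x ∂μ) ∧
    entropyXY f μ = -∫ x, B x ∂μ := by
  have hfint : Integrable f := by
    by_contra h
    rw [integral_undef h] at hf1
    norm_num at hf1
  have hCB0 : 0 ≤ CB := le_trans (abs_nonneg _) (hB (fun _ => 0))
  -- Part 2
  have part2 : ∫ x, Real.log (Lzero f (fun z => Real.exp (B z)) x / Real.exp (B x)) ∂μ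
      = -∫ x, B x ∂μ := by
    have h1 : ∀ x, Lzero f (fun z => Real.exp (B z)) x = 1 := by
      intro x
      simp only [Lzero]
      exact hnorm x
    have h2 : (fun x => Real.log (Lzero f (fun z => Real.exp (B z)) x / Real.exp (B x)))
        = fun x => -B x := by
      funext x
      rw [h1 x, Real.log_div one_ne_zero (Real.exp_ne_zero _), Real.log_one, Real.log_exp]
      ring
    rw [h2, integral_neg]
  -- ∫ B dμ ≥ 0
  have hBnonneg : 0 ≤ ∫ x, B x ∂μ := by
    rw [← hfix B hBc ⟨CB, hB⟩]
    apply integral_nonneg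
    intro x
    show (0:ℝ) ≤ ∫ a : ℝ, Real.exp (B (consR a x)) * B (consR a x) * f a
    have hwm : Continuous fun a : ℝ => Real.exp (B (consR a x)) * f a :=
      ((Real.continuous_exp.comp (hBc.comp
        (continuous_consR.comp (continuous_id.prodMk continuous_const)))).mul hfc)
    have hwi : Integrable (fun a : ℝ => Real.exp (B (consR a x)) * f a) := by
      apply (hfint.const_mul (Real.exp CB)).mono hwm.aestronglyMeasurable
      apply Filter.Eventually.of_forall
      intro a
      have h1 : Real.exp (B (consR a x)) ≤ Real.exp CB :=
        Real.exp_le_exp.mpr (le_trans (le_abs_self _) (hB _))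
      have := (hfpos a).le
      rw [Real.norm_eq_abs, Real.norm_eq_abs, abs_of_nonneg (by positivity),
        abs_of_nonneg (by positivity)]
      exact mul_le_mul_of_nonneg_right h1 this
    have hint1 : Integrable (fun a : ℝ => Real.exp (B (consR a x)) * B (consR a x) * f a) := by
      apply (hfint.const_mul (Real.exp CB * CB)).mono
      · exact (((Real.continuous_exp.comp (hBc.comp (continuous_consR.comp
          (continuous_id.prodMk continuous_const)))).mul (hBc.comp (continuous_consR.comp
          (continuous_id.prodMk continuous_const)))).mul hfc).aestronglyMeasurable
      · apply Filter.Eventually.of_forall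
        intro a
        have h1 : Real.exp (B (consR a x)) ≤ Real.exp CB :=
          Real.exp_le_exp.mpr (le_trans (le_abs_self _) (hB _))
        have h2 := hB (consR a x)
        have hf0 := (hfpos a).le
        rw [Real.norm_eq_abs, Real.norm_eq_abs, abs_mul, abs_mul,
          abs_of_nonneg (Real.exp_pos _).le, abs_of_nonneg hf0,
          abs_of_nonneg (by positivity : (0:ℝ) ≤ Real.exp CB * CB * f a)]
        apply mul_le_mul_of_nonneg_right _ hf0
        exact mul_le_mul h1 h2 (abs_nonneg _) (Real.exp_pos _).le
    have hzero : ∫ a : ℝ, (Real.exp (B (consR a x)) - 1) * f a = 0 := by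
      have : (fun a : ℝ => (Real.exp (B (consR a x)) - 1) * f a)
          = fun a => Real.exp (B (consR a x)) * f a - f a := by funext a; ring
      rw [this, integral_sub hwi hfint, hnorm x, hf1, sub_self]
    have hmono : ∫ a : ℝ, (Real.exp (B (consR a x)) - 1) * f a
        ≤ ∫ a : ℝ, Real.exp (B (consR a x)) * B (consR a x) * f a := by
      apply integral_mono _ hint1
      · intro a
        have hf0 := (hfpos a).le
        apply mul_le_mul_of_nonneg_right _ hf0
        exact exp_sub_one_le_mul (B (consR a x))
      · have : (fun a : ℝ => (Real.exp (B (consR a x)) - 1) * f a)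
            = fun a => Real.exp (B (consR a x)) * f a - f a := by funext a; ring
        rw [this]
        exact hwi.sub hfint
    linarith
  -- Part 1
  have part1 : ∀ u : (ℕ → ℝ) → ℝ, Continuous u → (∀ x, 0 < u x) → (∃ M, ∀ x, u x ≤ M) →
      -∫ x, B x ∂μ ≤ ∫ x, Real.log (Lzero f u x / u x) ∂μ := by
    rintro u huc hupos ⟨M, huM⟩
    have hM0 : 0 < M := lt_of_lt_of_le (hupos fun _ => 0) (huM _)
    have huint : ∀ x, Integrable (fun a : ℝ => u (consR a x) * f a) := by
      intro x
      apply (hfint.const_mul M).mono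
      · exact ((huc.comp (continuous_consR.comp
          (continuous_id.prodMk continuous_const))).mul hfc).aestronglyMeasurable
      · apply Filter.Eventually.of_forall
        intro a
        have h1 := hupos (consR a x); have h2 := huM (consR a x); have h3 := (hfpos a).le
        rw [Real.norm_eq_abs, Real.norm_eq_abs, abs_of_nonneg (by positivity),
          abs_of_nonneg (by positivity)]
        exact mul_le_mul_of_nonneg_right h2 h3
    have hLpos : ∀ x, 0 < Lzero f u x := by
      intro x
      rw [Lzero, integral_pos_iff_support_of_nonneg
        (fun a => by have := (hupos (consR a x)).le; have := (hfpos a).le; positivity)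
        (huint x)]
      have : (Function.support fun a => u (consR a x) * f a) = Set.univ := by
        ext a
        simp only [Function.support, Set.mem_setOf_eq, Set.mem_univ, iff_true]
        have := hupos (consR a x); have := hfpos a
        positivity
      rw [this]
      simp
    have hFeq : (fun x => Real.log (Lzero f u x / u x))
        = fun x => Real.log (Lzero f u x) - Real.log (u x) := by
      funext x
      rw [Real.log_div (ne_of_gt (hLpos x)) (ne_of_gt (hupos x))]
    by_cases hFi : Integrable (fun x => Real.log (Lzero f u x / u x)) μ
    · -- dominated convergence over ε_n = 1/(n+1)
      set Fn : ℕ → (ℕ → ℝ) → ℝ := fun n x =>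
        Real.log (Lzero f u x + 1 / (n + 1)) - Real.log (u x + 1 / (n + 1)) with hFn
      have hεpos : ∀ n : ℕ, (0:ℝ) < 1 / (n + 1) := by
        intro n; positivity
      have hkey : ∀ n : ℕ, -∫ x, B x ∂μ ≤ ∫ x, Fn n x ∂μ := fun n =>
        key_eps f hfc hfpos hf1 B hBc CB hB hnorm μ hfix u huc hupos M huM _ (hεpos n)
      have hLm : StronglyMeasurable (Lzero f u) := meas_int f hfc u huc
      have hFnm : ∀ n : ℕ, AEStronglyMeasurable (Fn n) μ := by
        intro n
        exact ((Real.measurable_log.comp ((hLm.measurable).add_const _)).sub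
          (Real.measurable_log.comp ((huc.measurable).add_const _))).aestronglyMeasurable
      have hdom : ∀ n : ℕ, ∀ᵐ x ∂μ, ‖Fn n x‖ ≤ |Real.log (Lzero f u x / u x)| := by
        intro n
        apply Filter.Eventually.of_forall
        intro x
        rw [Real.norm_eq_abs, hFn]
        have := abs_log_ratio (hLpos x) (hupos x) (hεpos n)
        rw [Real.log_div (ne_of_gt (hLpos x)) (ne_of_gt (hupos x))]
        exact this
      have hlim : ∀ᵐ x ∂μ, Filter.Tendsto (fun n => Fn n x) Filter.atTop
          (nhds (Real.log (Lzero f u x / u x))) := by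
        apply Filter.Eventually.of_forall
        intro x
        rw [Real.log_div (ne_of_gt (hLpos x)) (ne_of_gt (hupos x))]
        apply Filter.Tendsto.sub
        · have h1 : Filter.Tendsto (fun n : ℕ => Lzero f u x + 1 / (n + 1)) Filter.atTop
              (nhds (Lzero f u x)) := by
            have h := Filter.Tendsto.const_add (Lzero f u x)
              tendsto_one_div_add_atTop_nhds_zero_nat
            simpa using h
          exact ((Real.continuousAt_log (ne_of_gt (hLpos x))).tendsto).comp h1
        · have h1 : Filter.Tendsto (fun n : ℕ => u x + 1 / (n + 1)) Filter.atTop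
              (nhds (u x)) := by
            have h := Filter.Tendsto.const_add (u x)
              tendsto_one_div_add_atTop_nhds_zero_nat
            simpa using h
          exact ((Real.continuousAt_log (ne_of_gt (hupos x))).tendsto).comp h1
      have htend := tendsto_integral_of_dominated_convergence _ hFnm hFi.abs hdom hlim
      exact ge_of_tendsto htend (Filter.Eventually.of_forall hkey)
    · rw [integral_undef hFi]
      linarith
  refine ⟨part1, part2, ?_⟩
  -- Part 3
  have hmem : -∫ x, B x ∂μ ∈ {r : ℝ | ∃ u : (ℕ → ℝ) → ℝ, Continuous u ∧ (∀ x, 0 < u x) ∧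
      (∃ M, ∀ x, u x ≤ M) ∧ r = ∫ x, Real.log (Lzero f u x / u x) ∂μ} := by
    refine ⟨fun z => Real.exp (B z), Real.continuous_exp.comp hBc, fun x => Real.exp_pos _,
      ⟨Real.exp CB, fun x => Real.exp_le_exp.mpr (le_trans (le_abs_self _) (hB x))⟩, ?_⟩
    exact part2.symm
  apply le_antisymm
  · apply csInf_le
    · refine ⟨-∫ x, B x ∂μ, ?_⟩
      rintro r ⟨u, huc, hupos, hbd, rfl⟩
      exact part1 u huc hupos hbd
    · exact hmem
  · apply le_csInf ⟨_, hmem⟩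
    rintro r ⟨u, huc, hupos, hbd, rfl⟩
    exact part1 u huc hupos hbd
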